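/- Let c ∈ (0,1) be a constant such that |𝑃_M| ≥ c·M/log M for every integer M ≥ 2, where 𝑃_M is the set of primes p with ⌈M/2⌉ < p ≤ M. Then for every dimension d ≥ 1 and every tolerance ε ∈ (0,1) there exists an integer M ≥ 2 such that the equal-weight (QMC) rule based on the composite Korobov point set T_{M,d}^comp uses N = Σ_{p∈𝑃_M} p^2 ≤ (8d/(c·ε) + 1)^3 function evaluations and satisfies |ĉ(0) − (1/N) Σ_{p∈𝑃_M} Σ_{n=0}^{p^2−1} f(x̃_n^{(p)})| ≤ ε for every f : ℝ^d → ℂ given by an absolutely convergent Fourier series f(x) = Σ_{k∈ℤ^d} ĉ(k)·exp(2πi k·x) with Σ_{k∈ℤ^d} |ĉ(k)|·max(1, log|k|_∞) ≤ 1. In particular, the information complexity N(ε,d) for multivariate integration in F_d grows at most polynomially in ε^{−1} and d, with both exponents equal to 3, so the problem is polynomially tractable. -/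

import Mathlib

/-- `𝑃_M`: the set of primes `p` with `⌈M/2⌉ < p ≤ M` (note `⌈M/2⌉ = (M+1)/2` in `ℕ`). -/
def primesInDyadic (M : ℕ) : Finset ℕ :=
  (Finset.range (M + 1)).filter fun p => Nat.Prime p ∧ (M + 1) / 2 < p

open Finset
open Polynomial
noncomputable def Complex.abs : AbsoluteValue ℂ ℝ := NormedField.toAbsoluteValue ℂ
lemma Complex.norm_eq_abs (z : ℂ) : ‖z‖ = Complex.abs z := rfl
lemma Complex.abs_natCast (n : ℕ) : Complex.abs (n : ℂ) = n := by
  rw [← Complex.norm_eq_abs, Complex.norm_natCast]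
noncomputable def ep (q : ℕ) (a : ℤ) : ℂ := Complex.exp (2 * Real.pi * Complex.I * ((a : ℂ) / (q : ℂ)))

lemma ep_eq (q : ℕ) (a : ℤ) : ep q a = Complex.exp (((2 * Real.pi * (a / q) : ℝ) : ℂ) * Complex.I) := by
  unfold ep; congr 1; push_cast; ring

lemma ep_norm (q : ℕ) (a : ℤ) : Complex.abs (ep q a) = 1 := by
  rw [ep_eq]; exact Complex.norm_exp_ofReal_mul_I _

lemma ep_add (q : ℕ) (a b : ℤ) : ep q (a + b) = ep q a * ep q b := by
  unfold ep; rw [← Complex.exp_add]; congr 1; push_cast; ring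

lemma ep_dvd_eq_one (q : ℕ) (hq : q ≠ 0) (a : ℤ) (h : (q : ℤ) ∣ a) : ep q a = 1 := by
  obtain ⟨b, rfl⟩ := h
  unfold ep
  have hq' : (q : ℂ) ≠ 0 := Nat.cast_ne_zero.2 hq
  rw [show (2 * Real.pi * Complex.I * ((((q : ℤ) * b : ℤ) : ℂ) / (q : ℂ))) = (b : ℂ) * (2 * Real.pi * Complex.I) by push_cast; field_simp]
  exact Complex.exp_int_mul_two_pi_mul_I b

lemma ep_congr (q : ℕ) (hq : q ≠ 0) (a b : ℤ) (h : (q : ℤ) ∣ a - b) : ep q a = ep q b := by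
  have : ep q a = ep q (b + (a - b)) := by ring_nf
  rw [this, ep_add, ep_dvd_eq_one q hq _ h, mul_one]

lemma ep_nat_mul (q : ℕ) (v : ℕ) (a : ℤ) : ep q (v * a) = (ep q a) ^ v := by
  induction v with
  | zero => simp [ep]
  | succ n ih => rw [pow_succ, ← ih, ← ep_add]; congr 1; push_cast; ring

lemma ep_one_iff (q : ℕ) (hq : q ≠ 0) (a : ℤ) : ep q a = 1 ↔ (q : ℤ) ∣ a := by
  constructor
  · intro h
    rw [ep] at h
    obtain ⟨n, hn⟩ := Complex.exp_eq_one_iff.1 h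
    have hq' : (q : ℂ) ≠ 0 := Nat.cast_ne_zero.2 hq
    have h2 : (2 * Real.pi * Complex.I : ℂ) ≠ 0 := by
      simp [Complex.I_ne_zero, Real.pi_ne_zero]
    have key : (a : ℂ) = (n : ℂ) * q := by
      field_simp at hn
      have hn' : (2 * Real.pi * Complex.I : ℂ) * a = (2 * Real.pi * Complex.I : ℂ) * ((n : ℂ) * q) := by
        rw [hn]; ring
      exact mul_left_cancel₀ h2 hn'
    have key2 : a = n * q := by exact_mod_cast key
    exact Dvd.intro_left n key2.symm
  · exact ep_dvd_eq_one q hq a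

lemma ep_geom (p : ℕ) (hp : p ≠ 0) (m : ℤ) :
    ∑ v ∈ Finset.range p, ep p (v * m) = if (p : ℤ) ∣ m then (p : ℂ) else 0 := by
  by_cases h : (p : ℤ) ∣ m
  · simp only [h, if_true]
    rw [Finset.sum_congr rfl (fun v _ => by
      rw [ep_nat_mul, ep_dvd_eq_one p hp m h, one_pow])]
    simp
  · simp only [h, if_false]
    have hz : ep p m ≠ 1 := fun hh => h ((ep_one_iff p hp m).1 hh)
    rw [Finset.sum_congr rfl (fun v _ => ep_nat_mul p v m), geom_sum_eq hz]
    have hpm : ep p m ^ p = 1 := by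
      rw [← ep_nat_mul]
      exact ep_dvd_eq_one p hp _ ⟨m, by ring⟩
    rw [hpm, sub_self, zero_div]

lemma sum_range_sq_split (p : ℕ) (F : ℕ → ℂ) :
    ∑ n ∈ Finset.range (p ^ 2), F n = ∑ u ∈ Finset.range p, ∑ v ∈ Finset.range p, F (u + p * v) := by
  rcases Nat.eq_zero_or_pos p with rfl | hp
  · simp
  rw [← Finset.sum_product']
  apply Finset.sum_nbij' (fun n => (n % p, n / p)) (fun x => x.1 + p * x.2)
  · intro n hn
    simp only [Finset.mem_range, Finset.mem_product] at *
    exact ⟨Nat.mod_lt _ hp, Nat.div_lt_of_lt_mul (by rwa [← pow_two])⟩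
  · intro x hx
    simp only [Finset.mem_range, Finset.mem_product] at *
    have h1 : p * (x.2 + 1) = p * x.2 + p := by ring
    have h2 : p * (x.2 + 1) ≤ p * p := Nat.mul_le_mul_left p hx.2
    have h3 : p * p = p ^ 2 := (sq p).symm
    omega
  · intro n _; exact Nat.mod_add_div n p
  · intro x hx
    simp only [Finset.mem_range, Finset.mem_product] at hx
    ext
    · simp [Nat.add_mul_mod_self_left, Nat.mod_eq_of_lt hx.1]
    · simp [Nat.add_mul_div_left _ _ hp, Nat.div_eq_of_lt hx.1]
  · intro n _; rw [Nat.mod_add_div n p]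

lemma pow_succ_modeq (p u v : ℤ) (m : ℕ) :
    (u + p * v) ^ (m + 1) ≡ u ^ (m + 1) + (m + 1) * u ^ m * (p * v) [ZMOD p ^ 2] := by
  induction m with
  | zero =>
    show _ % _ = _ % _
    ring_nf
  | succ m ih =>
    have step1 : (u + p * v) ^ (m + 1 + 1) ≡ (u ^ (m + 1) + (m + 1) * u ^ m * (p * v)) * (u + p * v) [ZMOD p ^ 2] := by
      have := ih.mul_right (u + p * v)
      calc (u + p * v) ^ (m + 1 + 1) = (u + p * v) ^ (m + 1) * (u + p * v) := by ring
      _ ≡ _ [ZMOD p ^ 2] := this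
    refine step1.trans (Int.ModEq.symm ((Int.modEq_iff_dvd).2 ?_))
    exact ⟨((m : ℤ) + 1) * u ^ m * v * v, by push_cast; ring⟩


def gpoly (d : ℕ) (k : Fin d → ℤ) (n : ℤ) : ℤ := ∑ j : Fin d, k j * n ^ ((j : ℕ) + 1)
def dpoly (d : ℕ) (k : Fin d → ℤ) (u : ℤ) : ℤ := ∑ j : Fin d, (((j : ℕ) : ℤ) + 1) * k j * u ^ (j : ℕ)

lemma root_count (p d : ℕ) (hp : p.Prime) (hdp : d < p) (k : Fin d → ℤ)
    (j₀ : Fin d) (hj : ¬ ((p : ℤ) ∣ k j₀)) :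
    ((Finset.range p).filter (fun u : ℕ => (p : ℤ) ∣ dpoly d k (u : ℤ))).card ≤ d - 1 := by
  haveI : Fact p.Prime := ⟨hp⟩
  set Q : Polynomial (ZMod p) :=
    ∑ j : Fin d, Polynomial.C ((((j : ℕ) + 1 : ℕ) : ZMod p) * ((k j : ℤ) : ZMod p)) * Polynomial.X ^ (j : ℕ) with hQ
  have hcoef : Q.coeff (j₀ : ℕ) = (((j₀ : ℕ) + 1 : ℕ) : ZMod p) * ((k j₀ : ℤ) : ZMod p) := by
    rw [hQ, Polynomial.finset_sum_coeff]
    rw [Finset.sum_eq_single j₀]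
    · rw [Polynomial.coeff_C_mul, Polynomial.coeff_X_pow, if_pos rfl, mul_one]
    · intro j _ hne
      rw [Polynomial.coeff_C_mul, Polynomial.coeff_X_pow, if_neg (fun hh => hne (Fin.ext hh.symm)), mul_zero]
    · intro h; exact absurd (Finset.mem_univ j₀) h
  have hc0 : Q.coeff (j₀ : ℕ) ≠ 0 := by
    rw [hcoef]
    apply mul_ne_zero
    · rw [Ne, ZMod.natCast_eq_zero_iff]
      intro hdvd
      have := Nat.le_of_dvd (Nat.succ_pos _) hdvd
      omega
    · rw [Ne, ZMod.intCast_zmod_eq_zero_iff_dvd]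
      exact hj
  have hQ0 : Q ≠ 0 := fun h => hc0 (by rw [h]; simp)
  have hdeg : Q.natDegree ≤ d - 1 := by
    apply Polynomial.natDegree_sum_le_of_forall_le
    intro j _
    refine le_trans (Polynomial.natDegree_C_mul_X_pow_le _ _) ?_
    omega
  have heval : ∀ u : ℕ, (p : ℤ) ∣ dpoly d k (u : ℤ) → Q.IsRoot ((u : ℕ) : ZMod p) := by
    intro u hu
    have : ((dpoly d k (u : ℤ) : ℤ) : ZMod p) = 0 := by
      rw [ZMod.intCast_zmod_eq_zero_iff_dvd]; exact_mod_cast hu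
    rw [Polynomial.IsRoot, hQ]
    rw [Polynomial.eval_finset_sum]
    simp only [Polynomial.eval_mul, Polynomial.eval_C, Polynomial.eval_pow, Polynomial.eval_X]
    rw [← this]
    rw [dpoly]
    push_cast
    rfl
  apply le_trans ?_ (le_trans (Multiset.toFinset_card_le Q.roots) (le_trans (Polynomial.card_roots' Q) hdeg))
  apply Finset.card_le_card_of_injOn (fun u => ((u : ℕ) : ZMod p))
  · intro u hu
    simp only [Finset.coe_filter, Set.mem_setOf_eq, Finset.mem_filter, Finset.mem_range] at hu
    rw [Finset.mem_coe, Multiset.mem_toFinset, Polynomial.mem_roots hQ0]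
    exact heval u hu.2
  · intro u1 h1 u2 h2 heq
    simp only [Finset.mem_coe, Finset.mem_filter, Finset.mem_range] at h1 h2
    haveI : NeZero p := ⟨hp.pos.ne'⟩
    have := congrArg ZMod.val heq
    rwa [ZMod.val_cast_of_lt h1.1, ZMod.val_cast_of_lt h2.1] at this

lemma ep_sq_mul (p : ℕ) (hp : p ≠ 0) (a : ℤ) : ep (p ^ 2) ((p : ℤ) * a) = ep p a := by
  unfold ep
  congr 1
  have hp' : (p : ℂ) ≠ 0 := Nat.cast_ne_zero.2 hp
  push_cast
  field_simp

lemma korobov_bound (p d : ℕ) (hp : p.Prime) (hdp : d < p) (k : Fin d → ℤ)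
    (j₀ : Fin d) (hj : ¬ ((p : ℤ) ∣ k j₀)) :
    Complex.abs (∑ n ∈ Finset.range (p ^ 2), ep (p ^ 2) (gpoly d k (n : ℤ))) ≤ ((d - 1 : ℕ) : ℝ) * p := by
  have hp0 : p ≠ 0 := hp.pos.ne'
  have hp20 : p ^ 2 ≠ 0 := pow_ne_zero 2 hp0
  rw [sum_range_sq_split]
  have key : ∀ u v : ℕ, ep (p ^ 2) (gpoly d k ((u : ℤ) + p * v))
      = ep (p ^ 2) (gpoly d k u) * ep p ((v : ℤ) * dpoly d k u) := by
    intro u v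
    have hcong : ((p : ℤ) ^ 2) ∣ gpoly d k ((u : ℤ) + p * v) - (gpoly d k u + ((p : ℤ) * v) * dpoly d k u) := by
      have hre : gpoly d k ((u : ℤ) + p * v) - (gpoly d k u + ((p : ℤ) * v) * dpoly d k u)
          = ∑ j : Fin d, k j * (((u : ℤ) + p * v) ^ ((j : ℕ) + 1)
              - ((u : ℤ) ^ ((j : ℕ) + 1) + (((j : ℕ) : ℤ) + 1) * (u : ℤ) ^ (j : ℕ) * ((p : ℤ) * v))) := by
        rw [gpoly, gpoly, dpoly, Finset.mul_sum, ← Finset.sum_add_distrib, ← Finset.sum_sub_distrib]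
        apply Finset.sum_congr rfl
        intro j _
        ring
      rw [hre]
      apply Finset.dvd_sum
      intro j _
      apply Dvd.dvd.mul_left
      exact (pow_succ_modeq (p : ℤ) (u : ℤ) (v : ℤ) (j : ℕ)).symm.dvd
    have h1 : ep (p ^ 2) (gpoly d k ((u : ℤ) + p * v))
        = ep (p ^ 2) (gpoly d k u + ((p : ℤ) * v) * dpoly d k u) := by
      apply ep_congr _ hp20
      push_cast
      exact_mod_cast hcong
    rw [h1, ep_add]
    congr 1
    rw [show ((p : ℤ) * v) * dpoly d k u = (p : ℤ) * ((v : ℤ) * dpoly d k u) by ring]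
    exact ep_sq_mul p hp0 _
  calc Complex.abs (∑ u ∈ Finset.range p, ∑ v ∈ Finset.range p, ep (p ^ 2) (gpoly d k ((u : ℕ) + p * v : ℕ)))
      = Complex.abs (∑ u ∈ Finset.range p, ep (p ^ 2) (gpoly d k u) *
          (if (p : ℤ) ∣ dpoly d k u then (p : ℂ) else 0)) := by
        congr 1
        apply Finset.sum_congr rfl
        intro u _
        rw [← ep_geom p hp0 (dpoly d k u), Finset.mul_sum]
        apply Finset.sum_congr rfl
        intro v _
        rw [show (((u : ℕ) + p * v : ℕ) : ℤ) = (u : ℤ) + p * v by push_cast; ring, key u v]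
    _ ≤ ((d - 1 : ℕ) : ℝ) * p := by
        refine le_trans (AbsoluteValue.sum_le _ _ _) ?_
        have habs : ∀ u ∈ Finset.range p,
            Complex.abs (ep (p ^ 2) (gpoly d k u) * (if (p : ℤ) ∣ dpoly d k (u : ℤ) then (p : ℂ) else 0))
            = if (p : ℤ) ∣ dpoly d k (u : ℤ) then (p : ℝ) else 0 := by
          intro u _
          split_ifs with h
          · rw [map_mul, ep_norm, one_mul, Complex.abs_natCast]
          · rw [mul_zero, map_zero]
        rw [Finset.sum_congr rfl habs, ← Finset.sum_filter, Finset.sum_const, nsmul_eq_mul]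
        apply mul_le_mul_of_nonneg_right _ (Nat.cast_nonneg p)
        exact_mod_cast root_count p d hp hdp k j₀ hj

lemma trivial_bound (p d : ℕ) (k : Fin d → ℤ) :
    Complex.abs (∑ n ∈ Finset.range (p ^ 2), ep (p ^ 2) (gpoly d k (n : ℤ))) ≤ (p : ℝ) ^ 2 := by
  refine le_trans (AbsoluteValue.sum_le _ _ _) ?_
  have habs : ∀ n ∈ Finset.range (p ^ 2), Complex.abs (ep (p ^ 2) (gpoly d k (n : ℤ))) = 1 :=
    fun n _ => ep_norm _ _
  rw [Finset.sum_congr rfl habs, Finset.sum_const, Finset.card_range, nsmul_eq_mul, mul_one]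
  exact le_of_eq (by push_cast; ring)


lemma mem_primesInDyadic {M p : ℕ} :
    p ∈ primesInDyadic M ↔ p.Prime ∧ (M + 1) / 2 < p ∧ p ≤ M := by
  simp only [primesInDyadic, Finset.mem_filter, Finset.mem_range]
  constructor
  · rintro ⟨h1, h2, h3⟩; exact ⟨h2, h3, by omega⟩
  · rintro ⟨h1, h2, h3⟩; exact ⟨by omega, h1, h2⟩

lemma bad_card_bound (M d : ℕ) (hM4 : 4 ≤ M) (k : Fin d → ℤ) (j₀ : Fin d) (hj : k j₀ ≠ 0) :
    ((((primesInDyadic M).filter fun p : ℕ => ∀ j, (p : ℤ) ∣ k j).card : ℝ)) * Real.log M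
      ≤ 2 * max 1 (Real.log ((Finset.univ.sup fun j : Fin d => (k j).natAbs : ℕ) : ℝ)) := by
  set bad := (primesInDyadic M).filter fun p : ℕ => ∀ j, (p : ℤ) ∣ k j with hbad
  set B := bad.card with hB
  set K := (Finset.univ.sup fun j : Fin d => (k j).natAbs : ℕ) with hK
  set w := max 1 (Real.log (K : ℝ)) with hw
  have hprod_dvd : ∏ p ∈ bad, p ∣ (k j₀).natAbs := by
    apply Finset.prod_primes_dvd
    · intro p hp
      rw [hbad, Finset.mem_filter] at hp
      exact (mem_primesInDyadic.1 hp.1).1.prime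
    · intro p hp
      rw [hbad, Finset.mem_filter] at hp
      exact Int.natCast_dvd.mp (hp.2 j₀)
  have hna : 0 < (k j₀).natAbs := Int.natAbs_pos.2 hj
  have hprod_le : ∏ p ∈ bad, p ≤ K := le_trans (Nat.le_of_dvd hna hprod_dvd)
    (Finset.le_sup (f := fun j : Fin d => (k j).natAbs) (Finset.mem_univ j₀))
  have hhalf : ∀ p ∈ bad, (M : ℝ) / 2 ≤ (p : ℝ) := by
    intro p hp
    rw [hbad, Finset.mem_filter] at hp
    have h2 := (mem_primesInDyadic.1 hp.1).2.1
    have : M < 2 * p := by omega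
    have : (M : ℝ) < 2 * p := by exact_mod_cast this
    linarith
  have hpow : ((M : ℝ) / 2) ^ B ≤ (K : ℝ) := by
    calc ((M : ℝ) / 2) ^ B = ∏ _p ∈ bad, ((M : ℝ) / 2) := by rw [Finset.prod_const, hB]
    _ ≤ ∏ p ∈ bad, (p : ℝ) := by
        apply Finset.prod_le_prod
        · intro p _; positivity
        · exact hhalf
    _ = ((∏ p ∈ bad, p : ℕ) : ℝ) := by push_cast; rfl
    _ ≤ (K : ℝ) := by exact_mod_cast hprod_le
  have hM2 : (2 : ℝ) ≤ (M : ℝ) / 2 := by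
    have : (4 : ℝ) ≤ (M : ℝ) := by exact_mod_cast hM4
    linarith
  have hlogpow : (B : ℝ) * Real.log ((M : ℝ) / 2) ≤ Real.log K := by
    rw [← Real.log_pow]
    apply Real.log_le_log (by positivity) hpow
  have hloghalf : Real.log (M : ℝ) ≤ 2 * Real.log ((M : ℝ) / 2) := by
    have h4 : Real.log 4 ≤ Real.log (M : ℝ) := Real.log_le_log (by norm_num) (by exact_mod_cast hM4)
    have hlog2 : Real.log ((M : ℝ) / 2) = Real.log (M : ℝ) - Real.log 2 := by
      rw [Real.log_div (by positivity) (by norm_num)]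
    have h42 : Real.log 4 = 2 * Real.log 2 := by
      rw [show (4 : ℝ) = 2 ^ 2 by norm_num, Real.log_pow]; push_cast; ring
    linarith
  have hlogK_le : Real.log K ≤ w := le_max_right _ _
  have hB0 : (0 : ℝ) ≤ B := Nat.cast_nonneg _
  have hloghalf0 : 0 ≤ Real.log ((M : ℝ) / 2) := Real.log_nonneg (by linarith)
  calc (B : ℝ) * Real.log M ≤ (B : ℝ) * (2 * Real.log ((M : ℝ) / 2)) :=
        mul_le_mul_of_nonneg_left hloghalf hB0
    _ = 2 * ((B : ℝ) * Real.log ((M : ℝ) / 2)) := by ring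
    _ ≤ 2 * Real.log K := by linarith
    _ ≤ 2 * w := by linarith

lemma per_k_bound (c ε : ℝ) (hc0 : 0 < c) (hε0 : 0 < ε) (d M : ℕ) (hd : 1 ≤ d) (hM4 : 4 ≤ M)
    (hMd : 2 * d ≤ M)
    (hcard : c * M / Real.log M ≤ ((primesInDyadic M).card : ℝ))
    (hεM : 4 * ((d - 1 : ℕ) : ℝ) + 8 / c ≤ ε * M)
    (k : Fin d → ℤ) (hk : k ≠ 0) :
    Complex.abs (∑ p ∈ primesInDyadic M, ∑ n ∈ Finset.range (p ^ 2), ep (p ^ 2) (gpoly d k (n : ℤ)))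
      ≤ ε * max 1 (Real.log ((Finset.univ.sup fun j : Fin d => (k j).natAbs : ℕ) : ℝ)) *
        ((∑ p ∈ primesInDyadic M, p ^ 2 : ℕ) : ℝ) := by
  classical
  obtain ⟨j₀, hj₀⟩ : ∃ j, k j ≠ 0 := by
    by_contra h
    push_neg at h
    exact hk (funext h)
  set P := primesInDyadic M with hP
  set K := (Finset.univ.sup fun j : Fin d => (k j).natAbs : ℕ) with hK
  set w := max 1 (Real.log (K : ℝ)) with hw
  set L := Real.log (M : ℝ) with hL
  set D1 := ((d - 1 : ℕ) : ℝ) with hD1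
  set bad := P.filter (fun p : ℕ => ∀ j, (p : ℤ) ∣ k j) with hbad
  set A := (P.card : ℝ) with hA
  set B := (bad.card : ℝ) with hB
  set N := ((∑ p ∈ P, p ^ 2 : ℕ) : ℝ) with hN
  have hM0 : (0 : ℝ) < M := by
    have : (0:ℕ) < M := by omega
    exact_mod_cast this
  have hL0 : (0 : ℝ) < L := Real.log_pos (by exact_mod_cast (by omega : 1 < M))
  have hw1 : (1 : ℝ) ≤ w := le_max_left _ _
  have hw0 : (0 : ℝ) ≤ w := le_trans zero_le_one hw1
  have hA0 : (0 : ℝ) ≤ A := Nat.cast_nonneg _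
  have hB0 : (0 : ℝ) ≤ B := Nat.cast_nonneg _
  have hN0 : (0 : ℝ) ≤ N := Nat.cast_nonneg _
  have hD10 : (0 : ℝ) ≤ D1 := Nat.cast_nonneg _
  have hmem : ∀ p ∈ P, p.Prime ∧ d < p ∧ p ≤ M := by
    intro p hp
    obtain ⟨h1, h2, h3⟩ := mem_primesInDyadic.1 hp
    exact ⟨h1, by omega, h3⟩
  -- Step A+B: pointwise bound on each prime sum
  have stepA : Complex.abs (∑ p ∈ P, ∑ n ∈ Finset.range (p ^ 2), ep (p ^ 2) (gpoly d k (n : ℤ)))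
      ≤ ∑ p ∈ P, (if ∀ j, (p : ℤ) ∣ k j then ((p : ℝ) ^ 2) else D1 * p) := by
    refine le_trans (AbsoluteValue.sum_le _ _ _) (Finset.sum_le_sum ?_)
    intro p hp
    by_cases hbp : ∀ j, (p : ℤ) ∣ k j
    · rw [if_pos hbp]
      exact trivial_bound p d k
    · rw [if_neg hbp]
      push_neg at hbp
      obtain ⟨j1, hj1⟩ := hbp
      exact korobov_bound p d (hmem p hp).1 (hmem p hp).2.1 k j1 hj1
  -- Step B: bound the sum of the bounds
  have stepB : ∑ p ∈ P, (if ∀ j, (p : ℤ) ∣ k j then ((p : ℝ) ^ 2) else D1 * p)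
      ≤ B * (M : ℝ) ^ 2 + D1 * M * A := by
    rw [← Finset.sum_filter_add_sum_filter_not P (fun p : ℕ => ∀ j, (p : ℤ) ∣ k j)]
    have part1 : ∑ p ∈ bad, (if ∀ j, (p : ℤ) ∣ k j then ((p : ℝ) ^ 2) else D1 * p)
        ≤ B * (M : ℝ) ^ 2 := by
      rw [hB]
      refine le_trans (Finset.sum_le_card_nsmul _ _ ((M : ℝ) ^ 2) ?_) (by rw [nsmul_eq_mul])
      intro p hp
      rw [hbad, Finset.mem_filter] at hp
      rw [if_pos hp.2]
      have : (p : ℝ) ≤ M := by exact_mod_cast (hmem p hp.1).2.2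
      have hp0 : (0 : ℝ) ≤ p := Nat.cast_nonneg _
      nlinarith
    have part2 : ∑ p ∈ P.filter (fun p : ℕ => ¬ ∀ j, (p : ℤ) ∣ k j),
        (if ∀ j, (p : ℤ) ∣ k j then ((p : ℝ) ^ 2) else D1 * p) ≤ D1 * M * A := by
      refine le_trans (Finset.sum_le_card_nsmul _ _ (D1 * M) ?_) ?_
      · intro p hp
        rw [Finset.mem_filter] at hp
        rw [if_neg hp.2]
        have : (p : ℝ) ≤ M := by exact_mod_cast (hmem p hp.1).2.2
        exact mul_le_mul_of_nonneg_left this hD10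
      · rw [nsmul_eq_mul]
        have hcle : ((P.filter (fun p : ℕ => ¬ ∀ j, (p : ℤ) ∣ k j)).card : ℝ) ≤ A := by
          rw [hA]
          exact_mod_cast Finset.card_filter_le _ _
        have hDM : (0 : ℝ) ≤ D1 * M := by positivity
        calc ((P.filter (fun p : ℕ => ¬ ∀ j, (p : ℤ) ∣ k j)).card : ℝ) * (D1 * M)
            ≤ A * (D1 * M) := mul_le_mul_of_nonneg_right hcle hDM
          _ = D1 * M * A := by ring
    linarith
  -- Step C: N ≥ A * M^2 / 4
  have stepC : A * (M : ℝ) ^ 2 ≤ 4 * N := by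
    have : ∀ p ∈ P, ((M : ℝ) / 2) ^ 2 ≤ (p : ℝ) ^ 2 := by
      intro p hp
      have h2 := (mem_primesInDyadic.1 hp).2.1
      have hlt : M < 2 * p := by omega
      have hlt' : (M : ℝ) < 2 * p := by exact_mod_cast hlt
      have hp0 : (0 : ℝ) ≤ (M : ℝ) / 2 := by positivity
      apply pow_le_pow_left₀ hp0 (by linarith)
    have hsum : A * ((M : ℝ) / 2) ^ 2 ≤ N := by
      rw [hA, hN]
      calc (P.card : ℝ) * ((M : ℝ) / 2) ^ 2 = ∑ _p ∈ P, ((M : ℝ) / 2) ^ 2 := by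
            rw [Finset.sum_const, nsmul_eq_mul]
        _ ≤ ∑ p ∈ P, (p : ℝ) ^ 2 := Finset.sum_le_sum this
        _ = ((∑ p ∈ P, p ^ 2 : ℕ) : ℝ) := by push_cast; rfl
    nlinarith
  -- Step D
  have hAL : c * M ≤ A * L := by
    rw [div_le_iff₀ hL0] at hcard
    linarith
  have hBL : B * L ≤ 2 * w := bad_card_bound M d hM4 k j₀ hj₀
  have hεM' : 4 * D1 * c + 8 ≤ c * ε * M := by
    have := mul_le_mul_of_nonneg_left hεM hc0.le
    rw [mul_add] at this
    rw [show c * (8 / c) = 8 by field_simp] at this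
    nlinarith
  -- final arithmetic
  have hwNL0 : (0:ℝ) ≤ w * N * L := mul_nonneg (mul_nonneg hw0 hN0) hL0.le
  have hkey : (B * (M : ℝ) ^ 2 + D1 * M * A) * (c * M * L) ≤ (ε * w * N) * (c * M * L) := by
    have claim1 : D1 * M * A * (c * M * L) ≤ 4 * D1 * c * w * N * L := by
      calc D1 * M * A * (c * M * L) = (c * L * D1) * (A * (M:ℝ)^2) := by ring
        _ ≤ (c * L * D1) * (4 * N) :=
            mul_le_mul_of_nonneg_left stepC (mul_nonneg (mul_nonneg hc0.le hL0.le) hD10)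
        _ = (4 * D1 * c * N * L) * 1 := by ring
        _ ≤ (4 * D1 * c * N * L) * w := by
            apply mul_le_mul_of_nonneg_left hw1
            exact mul_nonneg (mul_nonneg (mul_nonneg (mul_nonneg (by norm_num) hD10) hc0.le) hN0) hL0.le
        _ = 4 * D1 * c * w * N * L := by ring
    have claim2 : B * (M:ℝ)^2 * (c * M * L) ≤ 8 * w * N * L := by
      have hM20 : (0:ℝ) ≤ B * L * (M:ℝ)^2 :=
        mul_nonneg (mul_nonneg hB0 hL0.le) (by positivity)
      calc B * (M:ℝ)^2 * (c * M * L) = (c * M) * (B * L * (M:ℝ)^2) := by ring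
        _ ≤ (A * L) * (B * L * (M:ℝ)^2) := mul_le_mul_of_nonneg_right hAL hM20
        _ = (B * L) * (A * L * (M:ℝ)^2) := by ring
        _ ≤ (2 * w) * (A * L * (M:ℝ)^2) := by
            apply mul_le_mul_of_nonneg_right hBL
            exact mul_nonneg (mul_nonneg hA0 hL0.le) (by positivity)
        _ = (2 * w * L) * (A * (M:ℝ)^2) := by ring
        _ ≤ (2 * w * L) * (4 * N) := by
            apply mul_le_mul_of_nonneg_left stepC
            exact mul_nonneg (mul_nonneg (by norm_num) hw0) hL0.le
        _ = 8 * w * N * L := by ring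
    have hRHS : (4 * D1 * c + 8) * (w * N * L) ≤ (c * ε * M) * (w * N * L) :=
      mul_le_mul_of_nonneg_right hεM' hwNL0
    have e1 : (B * (M:ℝ)^2 + D1 * M * A) * (c * M * L)
        = B * (M:ℝ)^2 * (c * M * L) + D1 * M * A * (c * M * L) := by ring
    have e2 : (ε * w * N) * (c * M * L) = (c * ε * M) * (w * N * L) := by ring
    have e3 : (4 * D1 * c + 8) * (w * N * L) = 4 * D1 * c * w * N * L + 8 * w * N * L := by ring
    linarith
  have hpos : (0:ℝ) < c * M * L := by
    apply mul_pos (mul_pos hc0 hM0) hL0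
  have final := le_of_mul_le_mul_right hkey hpos
  exact le_trans stepA (le_trans stepB final)

lemma exp_fract_eq (p : ℕ) (hp : p ≠ 0) (d : ℕ) (k : Fin d → ℤ) (n : ℕ) :
    Complex.exp (2 * Real.pi * Complex.I *
      ∑ j : Fin d, (k j : ℂ) * ((Int.fract ((n : ℝ) ^ ((j : ℕ) + 1) / ((p ^ 2 : ℕ) : ℝ)) : ℝ) : ℂ))
    = ep (p ^ 2) (gpoly d k (n : ℤ)) := by
  have hq : ((p ^ 2 : ℕ) : ℝ) ≠ 0 := Nat.cast_ne_zero.2 (pow_ne_zero _ hp)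
  set m : ℤ := ∑ j : Fin d, k j * ⌊(n : ℝ) ^ ((j : ℕ) + 1) / ((p ^ 2 : ℕ) : ℝ)⌋ with hm
  have harg : (∑ j : Fin d, (k j : ℂ) * ((Int.fract ((n : ℝ) ^ ((j : ℕ) + 1) / ((p ^ 2 : ℕ) : ℝ)) : ℝ) : ℂ))
      = ((gpoly d k (n : ℤ) : ℤ) : ℂ) / ((p ^ 2 : ℕ) : ℂ) - (m : ℂ) := by
    rw [gpoly, hm]
    push_cast
    rw [Finset.sum_div, ← Finset.sum_sub_distrib]
    apply Finset.sum_congr rfl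
    intro j _
    rw [Int.fract]
    push_cast
    ring
  rw [harg, show (2 * Real.pi * Complex.I) *
      (((gpoly d k (n : ℤ) : ℤ) : ℂ) / ((p ^ 2 : ℕ) : ℂ) - (m : ℂ))
      = 2 * Real.pi * Complex.I * (((gpoly d k (n : ℤ) : ℤ) : ℂ) / ((p ^ 2 : ℕ) : ℂ))
        + (-m : ℤ) * (2 * Real.pi * Complex.I) by push_cast; ring,
    Complex.exp_add, Complex.exp_int_mul_two_pi_mul_I, mul_one]
  rfl

lemma gpoly_zero (d : ℕ) (n : ℤ) : gpoly d (0 : Fin d → ℤ) n = 0 := by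
  simp [gpoly]

lemma ep_zero (q : ℕ) : ep q 0 = 1 := by
  simp [ep]

/-- Let `c ∈ (0,1)` with `|𝑃_M| ≥ c·M/log M` for all `M ≥ 2`. Then for
every `d ≥ 1` and `ε ∈ (0,1)` there is `M ≥ 2` such that the equal-weight QMC rule based
on `T_{M,d}^comp` uses `N = ∑_{p∈𝑃_M} p² ≤ (8d/(cε) + 1)³` function evaluations and
integrates every `f` with absolutely convergent Fourier series of weighted coefficient
norm `≤ 1` with error at most `ε`; hence the integration problem in `F_d` is polynomially
tractable with both exponents at most 3. -/
theorem polynomial_tractability_Fd (c : ℝ) (hc0 : 0 < c) (hc1 : c < 1)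
    (hcard : ∀ M : ℕ, 2 ≤ M → c * M / Real.log M ≤ ((primesInDyadic M).card : ℝ))
    (d : ℕ) (hd : 1 ≤ d) (ε : ℝ) (hε0 : 0 < ε) (hε1 : ε < 1) :
    ∃ M : ℕ, 2 ≤ M ∧
      ((∑ p ∈ primesInDyadic M, p ^ 2 : ℕ) : ℝ) ≤ (8 * d / (c * ε) + 1) ^ 3 ∧
      ∀ (f : (Fin d → ℝ) → ℂ) (coef : (Fin d → ℤ) → ℂ),
        (Summable fun k : Fin d → ℤ =>
          ‖coef k‖ *
            max 1 (Real.log ((Finset.univ.sup fun j : Fin d => (k j).natAbs : ℕ) : ℝ))) →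
        (∀ x : Fin d → ℝ, f x = ∑' k : Fin d → ℤ,
          coef k * Complex.exp (2 * Real.pi * Complex.I *
            ∑ j : Fin d, (k j : ℂ) * (x j : ℂ))) →
        (∑' k : Fin d → ℤ, ‖coef k‖ *
          max 1 (Real.log ((Finset.univ.sup fun j : Fin d => (k j).natAbs : ℕ) : ℝ))) ≤ 1 →
        ‖(coef 0 - (1 / ((∑ p ∈ primesInDyadic M, p ^ 2 : ℕ) : ℂ)) *
          ∑ p ∈ primesInDyadic M, ∑ n ∈ Finset.range (p ^ 2),
            f (fun j : Fin d => Int.fract ((n : ℝ) ^ ((j : ℕ) + 1) / (p ^ 2 : ℕ))))‖ ≤ ε := by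
  classical
  have hcε : 0 < c * ε := mul_pos hc0 hε0
  have hcε1 : c * ε < 1 := by nlinarith
  have hd1 : (1 : ℝ) ≤ (d : ℝ) := by exact_mod_cast hd
  set x : ℝ := 8 * (d : ℝ) / (c * ε) with hx
  have hx0 : 0 < x := by positivity
  have hx8d : 8 * (d : ℝ) ≤ x := by
    rw [hx, le_div_iff₀ hcε]
    nlinarith
  set M : ℕ := ⌈x⌉₊ with hM
  have hxM : x ≤ (M : ℝ) := Nat.le_ceil x
  have hMx : (M : ℝ) ≤ x + 1 := (Nat.ceil_lt_add_one hx0.le).le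
  have hM8 : 8 ≤ M := by
    have : (8 : ℝ) ≤ (M : ℝ) := by nlinarith
    exact_mod_cast this
  have hMd : 2 * d ≤ M := by
    have : (2 * d : ℝ) ≤ (M : ℝ) := by nlinarith
    exact_mod_cast this
  have hM2 : 2 ≤ M := by omega
  have hM4 : 4 ≤ M := by omega
  have hcardM := hcard M hM2
  have hL0 : 0 < Real.log (M : ℝ) := Real.log_pos (by exact_mod_cast (by omega : 1 < M))
  set P := primesInDyadic M with hP
  -- positivity of N
  have hP1 : 0 < P.card := by
    by_contra h
    push_neg at h
    interval_cases hc : P.card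
    have hpos : 0 < c * (M : ℝ) / Real.log (M : ℝ) := by positivity
    norm_num at hcardM
    linarith
  have hNpos : 0 < ∑ p ∈ P, p ^ 2 := by
    apply Finset.sum_pos
    · intro p hp
      have := (mem_primesInDyadic.1 hp).1.pos
      positivity
    · exact Finset.card_pos.1 hP1
  set Nn := ∑ p ∈ P, p ^ 2 with hNn
  refine ⟨M, hM2, ?_, ?_⟩
  · -- N ≤ (x+1)^3
    have hsub : P ⊆ Finset.Ico 2 (M + 1) := by
      intro p hp
      obtain ⟨h1, _, h3⟩ := mem_primesInDyadic.1 hp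
      rw [Finset.mem_Ico]
      exact ⟨h1.two_le, by omega⟩
    have hcP : P.card ≤ M := by
      have := Finset.card_le_card hsub
      rw [Nat.card_Ico] at this
      omega
    have hNle : Nn ≤ M * M ^ 2 := by
      calc Nn ≤ ∑ _p ∈ P, M ^ 2 := Finset.sum_le_sum (fun p hp => by
          have := (mem_primesInDyadic.1 hp).2.2
          exact Nat.pow_le_pow_left this 2)
        _ = P.card * M ^ 2 := by rw [Finset.sum_const, smul_eq_mul]
        _ ≤ M * M ^ 2 := Nat.mul_le_mul_right _ hcP
    have h1 : ((Nn : ℕ) : ℝ) ≤ (M : ℝ) ^ 3 := by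
      have : ((Nn : ℕ) : ℝ) ≤ ((M * M ^ 2 : ℕ) : ℝ) := by exact_mod_cast hNle
      calc ((Nn : ℕ) : ℝ) ≤ ((M * M ^ 2 : ℕ) : ℝ) := this
        _ = (M : ℝ) ^ 3 := by push_cast; ring
    calc ((Nn : ℕ) : ℝ) ≤ (M : ℝ) ^ 3 := h1
      _ ≤ (x + 1) ^ 3 := by
          apply pow_le_pow_left₀ (Nat.cast_nonneg M) hMx
      _ = (8 * d / (c * ε) + 1) ^ 3 := by rw [hx]
  · -- error bound
    have hεM : 4 * ((d - 1 : ℕ) : ℝ) + 8 / c ≤ ε * (M : ℝ) := by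
      have hεx : ε * x = 8 * (d : ℝ) / c := by
        rw [hx]; field_simp
      have h1 : ε * x ≤ ε * M := mul_le_mul_of_nonneg_left hxM hε0.le
      rw [hεx] at h1
      rw [Nat.cast_sub hd, Nat.cast_one]
      have h2 : 4 * ((d : ℝ) - 1) ≤ 8 * ((d : ℝ) - 1) / c := by
        rw [le_div_iff₀ hc0]; nlinarith
      have h3 : 8 * (d : ℝ) / c = 8 * ((d : ℝ) - 1) / c + 8 / c := by
        field_simp; ring
      linarith
    intro f coef hsum hf hnorm
    set w : (Fin d → ℤ) → ℝ := fun k =>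
      max 1 (Real.log ((Finset.univ.sup fun j : Fin d => (k j).natAbs : ℕ) : ℝ)) with hwdef
    have hw1 : ∀ k, 1 ≤ w k := fun k => le_max_left _ _
    have habs0 : ∀ k, 0 ≤ Complex.abs (coef k) := fun k => AbsoluteValue.nonneg _ _
    have hsum_abs : Summable (fun k : Fin d → ℤ => Complex.abs (coef k)) :=
      Summable.of_nonneg_of_le habs0
        (fun k => le_mul_of_one_le_right (habs0 k) (hw1 k)) hsum
    set T : (Fin d → ℤ) → ℂ := fun k => ∑ p ∈ P, ∑ n ∈ Finset.range (p ^ 2),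
      ep (p ^ 2) (gpoly d k (n : ℤ)) with hT
    have hTbound : ∀ k, Complex.abs (T k) ≤ (Nn : ℝ) := by
      intro k
      refine le_trans (AbsoluteValue.sum_le _ _ _) ?_
      rw [hNn]
      push_cast
      exact Finset.sum_le_sum (fun p _ => trivial_bound p d k)
    have hNC : ((Nn : ℕ) : ℂ) ≠ 0 := Nat.cast_ne_zero.2 hNpos.ne'
    have hNR : (0 : ℝ) < (Nn : ℝ) := by exact_mod_cast hNpos
    have hfx : ∀ p ∈ P, ∀ n : ℕ,
        f (fun j : Fin d => Int.fract ((n : ℝ) ^ ((j : ℕ) + 1) / ((p ^ 2 : ℕ) : ℝ)))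
          = ∑' k : Fin d → ℤ, coef k * ep (p ^ 2) (gpoly d k (n : ℤ)) := by
      intro p hp n
      rw [hf]
      exact tsum_congr (fun k => by
        rw [exp_fract_eq p (mem_primesInDyadic.1 hp).1.pos.ne' d k n])
    have hsummable1 : ∀ p n : ℕ,
        Summable (fun k : Fin d → ℤ => coef k * ep (p ^ 2) (gpoly d k (n : ℤ))) := by
      intro p n
      apply Summable.of_norm_bounded hsum_abs
      intro k
      rw [norm_mul, Complex.norm_eq_abs, Complex.norm_eq_abs, ep_norm, mul_one]
    have hbig : (∑ p ∈ P, ∑ n ∈ Finset.range (p ^ 2),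
        f (fun j : Fin d => Int.fract ((n : ℝ) ^ ((j : ℕ) + 1) / ((p ^ 2 : ℕ) : ℝ))))
        = ∑' k : Fin d → ℤ, coef k * T k := by
      calc (∑ p ∈ P, ∑ n ∈ Finset.range (p ^ 2),
          f (fun j : Fin d => Int.fract ((n : ℝ) ^ ((j : ℕ) + 1) / ((p ^ 2 : ℕ) : ℝ))))
          = ∑ p ∈ P, ∑ n ∈ Finset.range (p ^ 2),
            ∑' k : Fin d → ℤ, coef k * ep (p ^ 2) (gpoly d k (n : ℤ)) :=
          Finset.sum_congr rfl (fun p hp => Finset.sum_congr rfl (fun n _ => hfx p hp n))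
        _ = ∑ p ∈ P, ∑' k : Fin d → ℤ, ∑ n ∈ Finset.range (p ^ 2),
            coef k * ep (p ^ 2) (gpoly d k (n : ℤ)) :=
          Finset.sum_congr rfl (fun p _ => (Summable.tsum_finsetSum (fun n _ => hsummable1 p n)).symm)
        _ = ∑' k : Fin d → ℤ, ∑ p ∈ P, ∑ n ∈ Finset.range (p ^ 2),
            coef k * ep (p ^ 2) (gpoly d k (n : ℤ)) :=
          (Summable.tsum_finsetSum (fun p _ => summable_sum (fun n _ => hsummable1 p n))).symm
        _ = ∑' k : Fin d → ℤ, coef k * T k := by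
          apply tsum_congr
          intro k
          rw [hT, Finset.mul_sum]
          exact Finset.sum_congr rfl (fun p _ => by rw [Finset.mul_sum])
    have hptkey : ∀ k : Fin d → ℤ,
        Complex.abs ((if k = (0 : Fin d → ℤ) then (1 : ℂ) else 0) - T k / ((Nn : ℕ) : ℂ))
          ≤ ε * w k := by
      intro k
      by_cases hk : k = (0 : Fin d → ℤ)
      · subst hk
        have hT0 : T 0 = ((Nn : ℕ) : ℂ) := by
          rw [hT, hNn]
          push_cast
          apply Finset.sum_congr rfl
          intro p _
          rw [Finset.sum_congr rfl (fun n _ => by rw [gpoly_zero, ep_zero]),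
            Finset.sum_const, Finset.card_range, nsmul_eq_mul, mul_one]
          push_cast
          ring
        rw [if_pos rfl, hT0, div_self hNC, sub_self, map_zero]
        have := hw1 (0 : Fin d → ℤ)
        nlinarith
      · rw [if_neg hk, zero_sub, map_neg_eq_map, map_div₀, Complex.abs_natCast]
        rw [div_le_iff₀ hNR]
        have := per_k_bound c ε hc0 hε0 d M hd hM4 hMd hcardM hεM k hk
        calc Complex.abs (T k) ≤ ε * w k * ((∑ p ∈ P, p ^ 2 : ℕ) : ℝ) := this
          _ = ε * w k * (Nn : ℝ) := by rw [hNn]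
    have hptwise : ∀ k : Fin d → ℤ,
        ‖coef k * ((if k = (0 : Fin d → ℤ) then (1 : ℂ) else 0) - T k / ((Nn : ℕ) : ℂ))‖
          ≤ ε * (Complex.abs (coef k) * w k) := by
      intro k
      rw [norm_mul, Complex.norm_eq_abs, Complex.norm_eq_abs]
      calc Complex.abs (coef k) * Complex.abs ((if k = (0 : Fin d → ℤ) then (1:ℂ) else 0) - T k / ((Nn : ℕ) : ℂ))
          ≤ Complex.abs (coef k) * (ε * w k) :=
            mul_le_mul_of_nonneg_left (hptkey k) (habs0 k)
        _ = ε * (Complex.abs (coef k) * w k) := by ring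
    have hS1 : Summable (fun k : Fin d → ℤ => coef k * (if k = (0 : Fin d → ℤ) then (1:ℂ) else 0)) := by
      apply Summable.of_norm_bounded hsum_abs
      intro k
      rw [norm_mul]
      by_cases hk : k = (0 : Fin d → ℤ)
      · rw [if_pos hk, norm_one, mul_one, Complex.norm_eq_abs]
      · rw [if_neg hk, norm_zero, mul_zero]
        exact habs0 k
    have hS2 : Summable (fun k : Fin d → ℤ => coef k * (T k / ((Nn : ℕ) : ℂ))) := by
      apply Summable.of_norm_bounded hsum_abs
      intro k
      rw [norm_mul, Complex.norm_eq_abs, Complex.norm_eq_abs, map_div₀, Complex.abs_natCast]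
      calc Complex.abs (coef k) * (Complex.abs (T k) / (Nn : ℝ))
          ≤ Complex.abs (coef k) * 1 := by
            apply mul_le_mul_of_nonneg_left _ (habs0 k)
            rw [div_le_one hNR]
            exact hTbound k
        _ = Complex.abs (coef k) := mul_one _
    have hδ : coef 0 = ∑' k : Fin d → ℤ, coef k * (if k = (0 : Fin d → ℤ) then (1:ℂ) else 0) := by
      rw [tsum_eq_single (0 : Fin d → ℤ) (fun k hk => by rw [if_neg hk, mul_zero])]
      rw [if_pos rfl, mul_one]
    have hmain : coef 0 - (1 / ((Nn : ℕ) : ℂ)) * ∑' k : Fin d → ℤ, coef k * T k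
        = ∑' k : Fin d → ℤ, coef k *
          ((if k = (0 : Fin d → ℤ) then (1:ℂ) else 0) - T k / ((Nn : ℕ) : ℂ)) := by
      rw [hδ, ← tsum_mul_left]
      rw [show (fun k : Fin d → ℤ => (1 / ((Nn : ℕ) : ℂ)) * (coef k * T k))
          = (fun k : Fin d → ℤ => coef k * (T k / ((Nn : ℕ) : ℂ))) from funext (fun k => by ring)]
      rw [← Summable.tsum_sub hS1 hS2]
      exact tsum_congr (fun k => by ring)
    have hnormsum : Summable (fun k : Fin d → ℤ =>
        ‖coef k * ((if k = (0 : Fin d → ℤ) then (1:ℂ) else 0) - T k / ((Nn : ℕ) : ℂ))‖) :=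
      Summable.of_nonneg_of_le (fun k => norm_nonneg _) hptwise (hsum.mul_left ε)
    rw [hbig, hmain]
    calc ‖∑' k : Fin d → ℤ, coef k *
          ((if k = (0 : Fin d → ℤ) then (1:ℂ) else 0) - T k / ((Nn : ℕ) : ℂ))‖
        ≤ ∑' k : Fin d → ℤ, ‖coef k *
          ((if k = (0 : Fin d → ℤ) then (1:ℂ) else 0) - T k / ((Nn : ℕ) : ℂ))‖ :=
          norm_tsum_le_tsum_norm hnormsum
      _ ≤ ∑' k : Fin d → ℤ, ε * (Complex.abs (coef k) * w k) :=
          Summable.tsum_le_tsum hptwise hnormsum (hsum.mul_left ε)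
      _ = ε * ∑' k : Fin d → ℤ, Complex.abs (coef k) * w k := tsum_mul_left
      _ ≤ ε * 1 := mul_le_mul_of_nonneg_left hnorm hε0.le
      _ = ε := mul_one ε
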